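/- For w ∈ W, define π̃_w(x) = Π_{β ∈ R₀⁺ ∩ wR₀⁺} (1 + (β∨, x)). (1) If α ∈ R₀⁺ ∩ wR₀⁺, then for every x ∈ w a₊, π̃_{r_α w}(r_α x) ≤ π̃_w(x) / (1 + (α∨, x)). (2) If α ∈ R₀⁻ ∩ wR₀⁺, then there exists a constant C > 0 such that π̃_{r_α w}(r_α x) ≤ C · π̃_w(x) · (1 + (α∨, x))^{|R⁺|} for every x ∈ w a₊. -/

import Mathlib

open scoped BigOperators RealInnerProductSpace Classical

noncomputable section

variable {E : Type*} [NormedAddCommGroup E] [InnerProductSpace ℝ E] [FiniteDimensional ℝ E]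

/-- The coroot `α∨ = 2α/|α|²`. -/
def coroot (α : E) : E := (2 / ⟪α, α⟫) • α

/-- The orthogonal reflection `r_α x = x - (α∨, x) α`. -/
def rRefl (α : E) (x : E) : E := x - ⟪coroot α, x⟫ • α

/-- Data of an integral root system with positive subsystem and
a Weyl-invariant positive multiplicity function. -/
structure HOData (E : Type*) [NormedAddCommGroup E] [InnerProductSpace ℝ E] : Type _ where
  R : Finset E
  Rpos : Finset E
  k : E → ℝ
  k_pos : ∀ α ∈ R, 0 < k α
  root_ne_zero : ∀ α ∈ R, α ≠ 0
  pos_subset : Rpos ⊆ R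
  pos_char : ∃ u : E, ∀ α ∈ R, (α ∈ Rpos ↔ 0 < ⟪α, u⟫)
  pos_or_neg : ∀ α ∈ R, α ∈ Rpos ∨ -α ∈ Rpos
  neg_mem : ∀ α ∈ R, -α ∈ R
  integral : ∀ α ∈ R, ∀ β ∈ R, ∃ n : ℤ, ⟪coroot α, β⟫ = (n : ℝ)
  refl_mem : ∀ α ∈ R, ∀ β ∈ R, rRefl α β ∈ R
  k_inv : ∀ α ∈ R, ∀ β ∈ R, k (rRefl α β) = k β

/-- The Weyl group: the subgroup of linear isometries generated by the root reflections. -/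
def weylGroup (D : HOData E) : Subgroup (E ≃ₗᵢ[ℝ] E) :=
  Subgroup.closure {w : E ≃ₗᵢ[ℝ] E | ∃ α ∈ D.R, ∀ x, w x = rRefl α x}

/-- `ρ = (1/2) Σ_{α ∈ R⁺} k_α α`. -/
def rhoHO (D : HOData E) : E := (2:ℝ)⁻¹ • ∑ α ∈ D.Rpos, D.k α • α

/-- Regular points. -/
def HORegular (D : HOData E) (x : E) : Prop := ∀ α ∈ D.R, ⟪α, x⟫ ≠ 0

/-- The (open) positive Weyl chamber. -/
def posChamber (D : HOData E) : Set E := {x | ∀ α ∈ D.Rpos, 0 < ⟪α, x⟫}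

/-- The positive indivisible roots `R₀⁺`. -/
def Rpos0 (D : HOData E) : Finset E := D.Rpos.filter (fun α => (2:ℝ)⁻¹ • α ∉ D.R)

/-- The Opdam function `G_λ` for a real parameter `λ`: an analytic function,
normalized at `0`, satisfying the Cherednik differential-difference system. -/
def IsOpdamR (D : HOData E) (lam : E) (G : E → ℝ) : Prop :=
  AnalyticOnNhd ℝ G Set.univ ∧ G 0 = 1 ∧
  ∀ ξ x, HORegular D x →
    fderiv ℝ G x ξ =
      (∑ α ∈ D.Rpos, D.k α * ⟪α, ξ⟫ / (1 - Real.exp (-⟪α, x⟫)) * (G (rRefl α x) - G x))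
      + ⟪rhoHO D + lam, ξ⟫ * G x

/-- The Opdam function `G_λ` for a complex parameter `λ = l1 + i l2 ∈ h`. -/
def IsOpdamC (D : HOData E) (l1 l2 : E) (G : E → ℂ) : Prop :=
  AnalyticOnNhd ℝ G Set.univ ∧ G 0 = 1 ∧
  ∀ ξ x, HORegular D x →
    fderiv ℝ G x ξ =
      (∑ α ∈ D.Rpos, ((D.k α * ⟪α, ξ⟫ / (1 - Real.exp (-⟪α, x⟫)) : ℝ) : ℂ)
          * (G (rRefl α x) - G x))
      + (((⟪rhoHO D + l1, ξ⟫ : ℝ) : ℂ) + Complex.I * ((⟪l2, ξ⟫ : ℝ) : ℂ)) * G x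

/-- The symmetrization `F(x) = |W|⁻¹ Σ_{w ∈ W} G(w x)` (real valued case). -/
def Fsym (D : HOData E) [Fintype (weylGroup D)] (G : E → ℝ) (x : E) : ℝ :=
  (Fintype.card (weylGroup D) : ℝ)⁻¹ * ∑ w : weylGroup D, G (w.1 x)

/-- The symmetrization `F(x) = |W|⁻¹ Σ_{w ∈ W} G(w x)` (complex valued case). -/
def FsymC (D : HOData E) [Fintype (weylGroup D)] (G : E → ℂ) (x : E) : ℂ :=
  (Fintype.card (weylGroup D) : ℂ)⁻¹ * ∑ w : weylGroup D, G (w.1 x)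

/-- `max_{w ∈ W} (w λ, x)`. -/
def maxW (D : HOData E) [Fintype (weylGroup D)] (lam x : E) : ℝ :=
  ⨆ w : weylGroup D, ⟪w.1 lam, x⟫

/-- `π̃_w(x) = Π_{β ∈ R₀⁺ ∩ wR₀⁺} (1 + (β∨, x))`, written in terms of `σ = w⁻¹`. -/
def piTilde (D : HOData E) (σ : E → E) (x : E) : ℝ :=
  ∏ β ∈ (Rpos0 D).filter (fun β => σ β ∈ Rpos0 D), (1 + ⟪coroot β, x⟫)

set_option linter.unusedSectionVars false

section Lemmas
variable {E : Type*} [NormedAddCommGroup E] [InnerProductSpace ℝ E] [FiniteDimensional ℝ E]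

lemma inner_coroot_left (α x : E) : ⟪coroot α, x⟫ = 2 / ⟪α, α⟫ * ⟪α, x⟫ := by
  simp [coroot, real_inner_smul_left]

lemma rRefl_inner_inner (α : E) (hα : α ≠ 0) (u v : E) :
    ⟪rRefl α u, rRefl α v⟫ = ⟪u, v⟫ := by
  have h : ⟪α, α⟫ ≠ 0 := fun h => hα (inner_self_eq_zero.mp h)
  simp only [rRefl, inner_coroot_left, inner_sub_left, inner_sub_right,
    real_inner_smul_left, real_inner_smul_right]
  rw [real_inner_comm u α]
  field_simp
  ring

lemma rRefl_rRefl (α : E) (hα : α ≠ 0) (x : E) : rRefl α (rRefl α x) = x := by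
  have h : ⟪α, α⟫ ≠ 0 := fun h => hα (inner_self_eq_zero.mp h)
  simp only [rRefl, inner_coroot_left, inner_sub_right, real_inner_smul_right]
  rw [sub_sub, ← add_smul]
  have : 2 / ⟪α, α⟫ * ⟪α, x⟫ + (2 / ⟪α, α⟫ * ⟪α, x⟫ - 2 / ⟪α, α⟫ * ⟪α, x⟫ * (2 / ⟪α, α⟫ * ⟪α, α⟫)) = 0 := by
    field_simp; ring
  rw [this, zero_smul, sub_zero]

lemma rRefl_neg (α x : E) : rRefl (-α) x = rRefl α x := by
  simp [rRefl, coroot, inner_neg_neg, smul_neg, neg_smul]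

lemma rRefl_smul (α : E) (c : ℝ) (x : E) : rRefl α (c • x) = c • rRefl α x := by
  rw [rRefl, rRefl, real_inner_smul_right, smul_sub, mul_smul]

lemma inner_coroot_rRefl (α : E) (hα : α ≠ 0) (β x : E) :
    ⟪coroot β, rRefl α x⟫ = ⟪coroot (rRefl α β), x⟫ := by
  have h : ⟪α, α⟫ ≠ 0 := fun h => hα (inner_self_eq_zero.mp h)
  have hn : ⟪rRefl α β, rRefl α β⟫ = ⟪β, β⟫ := rRefl_inner_inner α hα β β
  simp only [inner_coroot_left, hn]
  congr 1
  simp only [rRefl, inner_coroot_left, inner_sub_left, inner_sub_right,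
    real_inner_smul_left, real_inner_smul_right]
  rw [real_inner_comm β α]
  ring

lemma coroot_isometry (w : E ≃ₗᵢ[ℝ] E) (γ : E) : coroot (w γ) = w (coroot γ) := by
  simp [coroot, w.inner_map_map, map_smul]

lemma inner_coroot_isometry (w : E ≃ₗᵢ[ℝ] E) (γ x : E) :
    ⟪coroot γ, x⟫ = ⟪coroot (w.symm γ), w.symm x⟫ := by
  rw [← w.symm.inner_map_map (coroot γ) x, coroot_isometry w.symm γ]

/-- all indivisible roots -/
def Rzero (D : HOData E) : Finset E := D.R.filter (fun γ => (2:ℝ)⁻¹ • γ ∉ D.R)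

lemma Rpos0_subset_Rzero (D : HOData E) : Rpos0 D ⊆ Rzero D := by
  intro γ hγ
  rw [Rpos0, Finset.mem_filter] at hγ
  rw [Rzero, Finset.mem_filter]
  exact ⟨D.pos_subset hγ.1, hγ.2⟩

lemma not_neg_mem_Rpos (D : HOData E) (α : E) (hα : α ∈ D.Rpos) : -α ∉ D.Rpos := by
  obtain ⟨u, hu⟩ := D.pos_char
  intro h
  have h1 := (hu α (D.pos_subset hα)).mp hα
  have h2 := (hu (-α) (D.pos_subset h)).mp h
  rw [inner_neg_left] at h2
  linarith

lemma neg_mem_Rzero (D : HOData E) (γ : E) (hγ : γ ∈ Rzero D) : -γ ∈ Rzero D := by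
  rw [Rzero, Finset.mem_filter] at *
  refine ⟨D.neg_mem γ hγ.1, fun h => hγ.2 ?_⟩
  have := D.neg_mem _ h
  rwa [smul_neg, neg_neg] at this

lemma rzero_sign (D : HOData E) (γ : E) (hγ : γ ∈ Rzero D) :
    γ ∈ Rpos0 D ∨ -γ ∈ Rpos0 D := by
  rw [Rzero, Finset.mem_filter] at hγ
  rcases D.pos_or_neg γ hγ.1 with h | h
  · exact Or.inl (Finset.mem_filter.mpr ⟨h, hγ.2⟩)
  · right
    rw [Rpos0, Finset.mem_filter]
    refine ⟨h, fun hc => hγ.2 ?_⟩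
    have := D.neg_mem _ hc
    rwa [smul_neg, neg_neg] at this

lemma rRefl_mem_Rzero (D : HOData E) (α : E) (hα : α ∈ D.R) (γ : E) (hγ : γ ∈ Rzero D) :
    rRefl α γ ∈ Rzero D := by
  rw [Rzero, Finset.mem_filter] at *
  refine ⟨D.refl_mem α hα γ hγ.1, fun h => hγ.2 ?_⟩
  have h2 := D.refl_mem α hα _ h
  rwa [← rRefl_smul, rRefl_rRefl α (D.root_ne_zero α hα)] at h2

lemma weyl_Rzero (D : HOData E) : ∀ w ∈ weylGroup D,
    ∀ γ ∈ Rzero D, w γ ∈ Rzero D ∧ w.symm γ ∈ Rzero D := by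
  intro w hw
  induction hw using Subgroup.closure_induction with
  | mem g hg =>
    obtain ⟨α, hα, hgeq⟩ := hg
    intro γ hγ
    have hgg : ∀ y : E, g (g y) = y := by
      intro y; rw [hgeq, hgeq, rRefl_rRefl α (D.root_ne_zero α hα)]
    have hsymm : ∀ y : E, g.symm y = g y := by
      intro y
      conv_lhs => rw [← hgg y]
      exact g.symm_apply_apply (g y)
    constructor
    · rw [hgeq]; exact rRefl_mem_Rzero D α hα γ hγ
    · rw [hsymm, hgeq]; exact rRefl_mem_Rzero D α hα γ hγ
  | one => intro γ hγ; exact ⟨by simpa using hγ, hγ⟩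
  | mul a b _ _ ha hb =>
    intro γ hγ
    constructor
    · have := (ha (b γ) ((hb γ hγ).1)).1
      simpa using this
    · have := (hb (a.symm γ) ((ha γ hγ).2)).2
      exact this
  | inv a _ ha =>
    intro γ hγ
    refine ⟨?_, ?_⟩
    · have := (ha γ hγ).2
      simpa using this
    · have := (ha γ hγ).1
      exact this

end Lemmas

section Lemmas2
variable {E : Type*} [NormedAddCommGroup E] [InnerProductSpace ℝ E] [FiniteDimensional ℝ E]

lemma inner_self_pos' {γ : E} (hγ : γ ≠ 0) : 0 < ⟪γ, γ⟫ :=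
  lt_of_le_of_ne real_inner_self_nonneg
    (fun h => hγ (inner_self_eq_zero.mp h.symm))

lemma inner_self_pos_of_mem (D : HOData E) (γ : E) (hγ : γ ∈ D.R) : 0 < ⟪γ, γ⟫ :=
  inner_self_pos' (D.root_ne_zero γ hγ)

lemma Rzero_subset_R (D : HOData E) : Rzero D ⊆ D.R := Finset.filter_subset _ _

lemma chamber_coroot_pos (D : HOData E) (w : E ≃ₗᵢ[ℝ] E) (x : E)
    (hx : w.symm x ∈ posChamber D) (γ : E) (h1 : w.symm γ ∈ D.Rpos) :
    0 < ⟪coroot γ, x⟫ := by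
  have h2 : 0 < ⟪γ, x⟫ := by
    have := hx _ h1
    rwa [w.symm.inner_map_map] at this
  have h3 : 0 < ⟪γ, γ⟫ := by
    have h4 : (0:ℝ) < ⟪w.symm γ, w.symm γ⟫ :=
      inner_self_pos_of_mem D _ (D.pos_subset h1)
    rwa [w.symm.inner_map_map] at h4
  rw [inner_coroot_left]
  positivity

lemma mem_pos_of_inner (D : HOData E) (w : E ≃ₗᵢ[ℝ] E) (hw : w ∈ weylGroup D) (x : E)
    (hx : w.symm x ∈ posChamber D) (γ : E) (hγ : γ ∈ Rzero D)
    (h : 0 < ⟪coroot γ, x⟫) : w.symm γ ∈ Rpos0 D := by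
  have hz : w.symm γ ∈ Rzero D := (weyl_Rzero D w hw γ hγ).2
  rcases rzero_sign D _ hz with h1 | h1
  · exact h1
  · exfalso
    have h2 : 0 < ⟪-(w.symm γ), w.symm x⟫ := hx _ ((Finset.mem_filter.mp h1).1)
    rw [inner_neg_left, neg_pos, w.symm.inner_map_map] at h2
    have h3 : 0 < ⟪γ, γ⟫ := inner_self_pos_of_mem D γ (Rzero_subset_R D hγ)
    rw [inner_coroot_left] at h
    have h5 : (0:ℝ) < 2 / ⟪γ, γ⟫ := by positivity
    nlinarith

lemma key_id (α β x : E) (hα : α ≠ 0) (hβ : β ≠ 0) :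
    ⟪coroot (rRefl α β), x⟫
      = ⟪coroot β, x⟫ - ⟪coroot α, β⟫ * ⟪α, α⟫ / ⟪β, β⟫ * ⟪coroot α, x⟫ := by
  have hnα : ⟪α, α⟫ ≠ 0 := fun h => hα (inner_self_eq_zero.mp h)
  have hnβ : ⟪β, β⟫ ≠ 0 := fun h => hβ (inner_self_eq_zero.mp h)
  rw [← inner_coroot_rRefl α hα β x, rRefl, inner_sub_right, real_inner_smul_right]
  congr 1
  simp only [inner_coroot_left]
  rw [real_inner_comm β α]
  field_simp

lemma c_sign (D : HOData E) (u : E) (hu : ∀ γ ∈ D.R, (γ ∈ D.Rpos ↔ 0 < ⟪γ, u⟫))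
    (α β : E) (hα : α ∈ D.R) (hβ : β ∈ D.Rpos)
    (hγn : rRefl α β ∉ D.Rpos) : 0 < ⟪coroot α, β⟫ * ⟪α, u⟫ := by
  have hγR : rRefl α β ∈ D.R := D.refl_mem α hα β (D.pos_subset hβ)
  have h1 : 0 < ⟪β, u⟫ := (hu β (D.pos_subset hβ)).mp hβ
  have h2 : ¬ (0 < ⟪rRefl α β, u⟫) := fun h => hγn ((hu _ hγR).mpr h)
  push_neg at h2
  rw [rRefl, inner_sub_left, real_inner_smul_left] at h2
  linarith

end Lemmas2

section Main
variable {E : Type*} [NormedAddCommGroup E] [InnerProductSpace ℝ E] [FiniteDimensional ℝ E]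

lemma rRefl_self (α : E) (hα : α ≠ 0) : rRefl α α = -α := by
  have hn : ⟪α, α⟫ ≠ 0 := fun h => hα (inner_self_eq_zero.mp h)
  have h2 : 2 / ⟪α, α⟫ * ⟪α, α⟫ = 2 := div_mul_cancel₀ 2 hn
  rw [rRefl, inner_coroot_left, h2, two_smul]
  abel

lemma part1 (D : HOData E) (w : E ≃ₗᵢ[ℝ] E) (hw : w ∈ weylGroup D) (α : E)
    (hα : α ∈ Rpos0 D) (hwα : w.symm α ∈ Rpos0 D) (x : E) (hx : w.symm x ∈ posChamber D) :
    piTilde D (fun β => w.symm (rRefl α β)) (rRefl α x)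
      ≤ piTilde D (fun β => w.symm β) x / (1 + ⟪coroot α, x⟫) := by
  classical
  obtain ⟨u, hu⟩ := D.pos_char
  have hαpos : α ∈ D.Rpos := (Finset.mem_filter.mp hα).1
  have hαR : α ∈ D.R := D.pos_subset hαpos
  have hα0 : α ≠ 0 := D.root_ne_zero α hαR
  have ht : 0 < ⟪coroot α, x⟫ :=
    chamber_coroot_pos D w x hx α (Finset.mem_filter.mp hwα).1
  set S : Finset E := (Rpos0 D).filter (fun β => w.symm (rRefl α β) ∈ Rpos0 D) with hS
  set T : Finset E := (Rpos0 D).filter (fun β => w.symm β ∈ Rpos0 D) with hT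
  set f : E → ℝ := fun β => 1 + ⟪coroot β, x⟫ with hf
  -- basic facts about elements of S
  have hSfact : ∀ β ∈ S, β ∈ Rpos0 D ∧ w.symm (rRefl α β) ∈ Rpos0 D := by
    intro β hβ; exact Finset.mem_filter.mp hβ
  have hγz : ∀ β ∈ S, rRefl α β ∈ Rzero D := by
    intro β hβ
    exact rRefl_mem_Rzero D α hαR β (Rpos0_subset_Rzero D (hSfact β hβ).1)
  have hfγpos : ∀ β ∈ S, 0 < ⟪coroot (rRefl α β), x⟫ := by
    intro β hβ
    exact chamber_coroot_pos D w x hx _ (Finset.mem_filter.mp (hSfact β hβ).2).1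
  -- positivity of c in the "negative" case
  have hcβ : ∀ β ∈ S, rRefl α β ∉ Rpos0 D → 0 < ⟪coroot α, β⟫ := by
    intro β hβ hc
    have hβpos : β ∈ D.Rpos := (Finset.mem_filter.mp (hSfact β hβ).1).1
    have hγnp : rRefl α β ∉ D.Rpos := fun hcc =>
      hc (Finset.mem_filter.mpr ⟨hcc, (Finset.mem_filter.mp (hγz β hβ)).2⟩)
    have hcs := c_sign D u hu α β hαR hβpos hγnp
    have hαu : 0 < ⟪α, u⟫ := (hu α hαR).mp hαpos
    nlinarith
  set ψ : E → E := fun β => if rRefl α β ∈ Rpos0 D then rRefl α β else β with hψ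
  -- the term comparison
  have hterm : ∀ β ∈ S, rRefl α β ∉ Rpos0 D →
      ⟪coroot (rRefl α β), x⟫ < ⟪coroot β, x⟫ := by
    intro β hβ hc
    have hβR : β ∈ D.R := D.pos_subset (Finset.mem_filter.mp (hSfact β hβ).1).1
    have hβ0 : β ≠ 0 := D.root_ne_zero β hβR
    rw [key_id α β x hα0 hβ0]
    have h1 : 0 < ⟪coroot α, β⟫ * ⟪α, α⟫ / ⟪β, β⟫ * ⟪coroot α, x⟫ := by
      have := hcβ β hβ hc
      have haa := inner_self_pos_of_mem D α hαR
      have hbb := inner_self_pos_of_mem D β hβR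
      positivity
    linarith
  have hle : ∀ β ∈ S, f (rRefl α β) ≤ f (ψ β) := by
    intro β hβ
    by_cases hc : rRefl α β ∈ Rpos0 D
    · simp only [hψ, if_pos hc, le_refl]
    · simp only [hψ, if_neg hc, hf]
      have := hterm β hβ hc
      linarith
  have h0 : ∀ β ∈ S, 0 ≤ f (rRefl α β) := by
    intro β hβ
    have := hfγpos β hβ
    simp only [hf]; linarith
  have hinj : ∀ β₁ ∈ S, ∀ β₂ ∈ S, ψ β₁ = ψ β₂ → β₁ = β₂ := by
    intro β₁ h₁ β₂ h₂ heq
    by_cases c₁ : rRefl α β₁ ∈ Rpos0 D <;> by_cases c₂ : rRefl α β₂ ∈ Rpos0 D <;>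
      simp only [hψ, if_pos, if_neg, c₁, c₂, if_true, if_false] at heq
    · have := congrArg (rRefl α) heq
      rwa [rRefl_rRefl α hα0, rRefl_rRefl α hα0] at this
    · exfalso
      apply c₂
      rw [← heq, rRefl_rRefl α hα0]
      exact (hSfact β₁ h₁).1
    · exfalso
      apply c₁
      rw [heq, rRefl_rRefl α hα0]
      exact (hSfact β₂ h₂).1
    · exact heq
  have hsub : S.image ψ ⊆ T.erase α := by
    intro γ hγ
    obtain ⟨β, hβS, rfl⟩ := Finset.mem_image.mp hγ
    have hβp := (hSfact β hβS).1
    have hwγ := (hSfact β hβS).2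
    by_cases hc : rRefl α β ∈ Rpos0 D
    · simp only [hψ, if_pos hc]
      refine Finset.mem_erase.mpr ⟨?_, Finset.mem_filter.mpr ⟨hc, hwγ⟩⟩
      intro he
      have hβeq : β = -α := by
        have := congrArg (rRefl α) he
        rwa [rRefl_rRefl α hα0, rRefl_self α hα0] at this
      apply not_neg_mem_Rpos D α hαpos
      rw [← hβeq]
      exact (Finset.mem_filter.mp hβp).1
    · simp only [hψ, if_neg hc]
      refine Finset.mem_erase.mpr ⟨?_, ?_⟩
      · intro he
        apply not_neg_mem_Rpos D (w.symm α) (Finset.mem_filter.mp hwα).1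
        have : rRefl α β = -α := by rw [he, rRefl_self α hα0]
        have h2 := (Finset.mem_filter.mp hwγ).1
        rw [this, map_neg] at h2
        exact h2
      · refine Finset.mem_filter.mpr ⟨hβp, ?_⟩
        apply mem_pos_of_inner D w hw x hx β (Rpos0_subset_Rzero D hβp)
        have hβR : β ∈ D.R := D.pos_subset (Finset.mem_filter.mp hβp).1
        have hβ0 : β ≠ 0 := D.root_ne_zero β hβR
        have hk := key_id α β x hα0 hβ0
        have h1 : 0 < ⟪coroot α, β⟫ * ⟪α, α⟫ / ⟪β, β⟫ * ⟪coroot α, x⟫ := by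
          have := hcβ β hβS hc
          have haa := inner_self_pos_of_mem D α hαR
          have hbb := inner_self_pos_of_mem D β hβR
          positivity
        have := hfγpos β hβS
        linarith
  have hone : ∀ γ ∈ T.erase α, 1 ≤ f γ := by
    intro γ hγ
    have hγT := Finset.mem_erase.mp hγ |>.2
    have := chamber_coroot_pos D w x hx γ
      (Finset.mem_filter.mp (Finset.mem_filter.mp hγT).2).1
    simp only [hf]; linarith
  have hαT : α ∈ T := Finset.mem_filter.mpr ⟨hα, hwα⟩
  have hchain : ∏ β ∈ S, f (rRefl α β) ≤ ∏ γ ∈ T.erase α, f γ := by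
    calc ∏ β ∈ S, f (rRefl α β) ≤ ∏ β ∈ S, f (ψ β) := Finset.prod_le_prod h0 hle
      _ = ∏ γ ∈ S.image ψ, f γ := (Finset.prod_image hinj).symm
      _ ≤ ∏ γ ∈ T.erase α, f γ := by
          rw [← Finset.prod_sdiff hsub]
          have h1 : (1:ℝ) ≤ ∏ γ ∈ (T.erase α) \ (S.image ψ), f γ := by
            rw [← Finset.prod_const_one (s := (T.erase α) \ (S.image ψ))]
            exact Finset.prod_le_prod (fun i _ => zero_le_one)
              (fun i hi => hone i (Finset.mem_sdiff.mp hi).1)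
          have h2 : 0 ≤ ∏ γ ∈ S.image ψ, f γ :=
            Finset.prod_nonneg (fun i hi => le_trans zero_le_one (hone i (hsub hi)))
          exact le_mul_of_one_le_left h2 h1
  have hL : piTilde D (fun β => w.symm (rRefl α β)) (rRefl α x) = ∏ β ∈ S, f (rRefl α β) := by
    rw [piTilde]
    apply Finset.prod_congr rfl
    intro β _
    rw [hf, inner_coroot_rRefl α hα0]
  have hR : piTilde D (fun β => w.symm β) x = ∏ β ∈ T, f β := rfl
  rw [hL, hR, le_div_iff₀ (by linarith : (0:ℝ) < 1 + ⟪coroot α, x⟫)]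
  have hT2 : ∏ β ∈ T, f β = f α * ∏ β ∈ T.erase α, f β := (Finset.mul_prod_erase T f hαT).symm
  rw [hT2, hf]
  calc (∏ β ∈ S, f (rRefl α β)) * (1 + ⟪coroot α, x⟫)
      ≤ (∏ γ ∈ T.erase α, f γ) * (1 + ⟪coroot α, x⟫) :=
        mul_le_mul_of_nonneg_right hchain (by linarith)
    _ = (1 + ⟪coroot α, x⟫) * ∏ γ ∈ T.erase α, f γ := mul_comm _ _

end Main

section Main2
variable {E : Type*} [NormedAddCommGroup E] [InnerProductSpace ℝ E] [FiniteDimensional ℝ E]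

lemma part2 (D : HOData E) (w : E ≃ₗᵢ[ℝ] E) (hw : w ∈ weylGroup D) (α : E)
    (hα : -α ∈ Rpos0 D) (hwα : w.symm α ∈ Rpos0 D) :
    ∃ C : ℝ, 0 < C ∧ ∀ x : E, w.symm x ∈ posChamber D →
      piTilde D (fun β => w.symm (rRefl α β)) (rRefl α x)
        ≤ C * piTilde D (fun β => w.symm β) x * (1 + ⟪coroot α, x⟫) ^ (D.Rpos.card : ℕ) := by
  classical
  obtain ⟨u, hu⟩ := D.pos_char
  have hnαpos : -α ∈ D.Rpos := (Finset.mem_filter.mp hα).1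
  have hnαR : -α ∈ D.R := D.pos_subset hnαpos
  have hαR : α ∈ D.R := by have := D.neg_mem _ hnαR; rwa [neg_neg] at this
  have hα0 : α ≠ 0 := D.root_ne_zero α hαR
  have hαz : α ∈ Rzero D := by
    have := neg_mem_Rzero D _ (Rpos0_subset_Rzero D hα); rwa [neg_neg] at this
  have hαnp : α ∉ D.Rpos := fun h => not_neg_mem_Rpos D α h hnαpos
  have hαu : ⟪α, u⟫ < 0 := by
    have := (hu (-α) hnαR).mp hnαpos
    rw [inner_neg_left] at this; linarith
  set S : Finset E := (Rpos0 D).filter (fun β => w.symm (rRefl α β) ∈ Rpos0 D) with hS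
  set T : Finset E := (Rpos0 D).filter (fun β => w.symm β ∈ Rpos0 D) with hT
  set K : E → ℝ := fun β => max 1 (|⟪coroot α, β⟫| * ⟪α, α⟫ / ⟪β, β⟫) with hK
  have hK1 : ∀ β, 1 ≤ K β := fun β => le_max_left _ _
  refine ⟨∏ β ∈ S, K β, Finset.prod_pos (fun β _ => lt_of_lt_of_le one_pos (hK1 β)), ?_⟩
  intro x hx
  set f : E → ℝ := fun β => 1 + ⟪coroot β, x⟫ with hf
  have ht : 0 < ⟪coroot α, x⟫ :=
    chamber_coroot_pos D w x hx α (Finset.mem_filter.mp hwα).1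
  set t : ℝ := ⟪coroot α, x⟫ with htdef
  have hSfact : ∀ β ∈ S, β ∈ Rpos0 D ∧ w.symm (rRefl α β) ∈ Rpos0 D := by
    intro β hβ; exact Finset.mem_filter.mp hβ
  have hγz : ∀ β ∈ S, rRefl α β ∈ Rzero D := by
    intro β hβ
    exact rRefl_mem_Rzero D α hαR β (Rpos0_subset_Rzero D (hSfact β hβ).1)
  have hfγpos : ∀ β ∈ S, 0 < ⟪coroot (rRefl α β), x⟫ := by
    intro β hβ
    exact chamber_coroot_pos D w x hx _ (Finset.mem_filter.mp (hSfact β hβ).2).1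
  have hcβ : ∀ β ∈ S, rRefl α β ∉ Rpos0 D → ⟪coroot α, β⟫ < 0 := by
    intro β hβ hc
    have hβpos : β ∈ D.Rpos := (Finset.mem_filter.mp (hSfact β hβ).1).1
    have hγnp : rRefl α β ∉ D.Rpos := fun hcc =>
      hc (Finset.mem_filter.mpr ⟨hcc, (Finset.mem_filter.mp (hγz β hβ)).2⟩)
    have hcs := c_sign D u hu α β hαR hβpos hγnp
    nlinarith
  set ψ : E → E := fun β => if rRefl α β ∈ Rpos0 D then rRefl α β else β with hψ
  set h : E → ℝ := fun β => if ψ β ∈ T then f (ψ β) else 1 with hh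
  have honeT : ∀ γ ∈ T, 1 ≤ f γ := by
    intro γ hγ
    have := chamber_coroot_pos D w x hx γ
      (Finset.mem_filter.mp (Finset.mem_filter.mp hγ).2).1
    simp only [hf]; linarith
  have h0 : ∀ β ∈ S, 0 ≤ f (rRefl α β) := by
    intro β hβ
    have := hfγpos β hβ
    simp only [hf]; linarith
  -- term-by-term bound
  have hterm : ∀ β ∈ S, f (rRefl α β) ≤ K β * (1 + t) * h β := by
    intro β hβ
    have hβp := (hSfact β hβ).1
    have hβR : β ∈ D.R := D.pos_subset (Finset.mem_filter.mp hβp).1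
    have hβ0 : β ≠ 0 := D.root_ne_zero β hβR
    by_cases hc : rRefl α β ∈ Rpos0 D
    · have hψβ : ψ β = rRefl α β := by simp only [hψ, if_pos hc]
      have hγT : rRefl α β ∈ T := Finset.mem_filter.mpr ⟨hc, (hSfact β hβ).2⟩
      have hhβ : h β = f (rRefl α β) := by
        simp only [hh, hψβ, if_pos hγT]
      rw [hhβ]
      have h1 : 1 ≤ K β * (1 + t) := by nlinarith [hK1 β, ht.le]
      exact le_mul_of_one_le_left (h0 β hβ) h1
    · have hψβ : ψ β = β := by simp only [hψ, if_neg hc]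
      have hcneg := hcβ β hβ hc
      have haa := inner_self_pos_of_mem D α hαR
      have hbb := inner_self_pos_of_mem D β hβR
      have hq : |⟪coroot α, β⟫| * ⟪α, α⟫ / ⟪β, β⟫
          = -(⟪coroot α, β⟫ * ⟪α, α⟫ / ⟪β, β⟫) := by
        rw [abs_of_neg hcneg]; ring
      have hKq : -(⟪coroot α, β⟫ * ⟪α, α⟫ / ⟪β, β⟫) ≤ K β := by
        rw [← hq]; exact le_max_right _ _
      have hqpos : 0 < -(⟪coroot α, β⟫ * ⟪α, α⟫ / ⟪β, β⟫) := by
        have : ⟪coroot α, β⟫ * ⟪α, α⟫ / ⟪β, β⟫ < 0 := by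
          apply div_neg_of_neg_of_pos _ hbb
          exact mul_neg_of_neg_of_pos hcneg haa
        linarith
      have hkey : f (rRefl α β)
          = f β + (-(⟪coroot α, β⟫ * ⟪α, α⟫ / ⟪β, β⟫)) * t := by
        simp only [hf]
        rw [key_id α β x hα0 hβ0]
        ring
      by_cases hTc : β ∈ T
      · have hhβ : h β = f β := by simp only [hh, hψβ, if_pos hTc]
        rw [hhβ, hkey]
        have hfβ1 : 1 ≤ f β := honeT β hTc
        have e1 : f β ≤ K β * f β := le_mul_of_one_le_left (by linarith) (hK1 β)
        have e2 : -(⟪coroot α, β⟫ * ⟪α, α⟫ / ⟪β, β⟫) * t ≤ K β * t :=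
          mul_le_mul_of_nonneg_right hKq ht.le
        have e3 : K β * t ≤ K β * t * f β :=
          le_mul_of_one_le_right (by nlinarith [hK1 β, ht.le]) hfβ1
        calc f β + -(⟪coroot α, β⟫ * ⟪α, α⟫ / ⟪β, β⟫) * t
            ≤ K β * f β + K β * t * f β := add_le_add e1 (le_trans e2 e3)
          _ = K β * (1 + t) * f β := by ring
      · have hhβ : h β = 1 := by simp only [hh, hψβ, if_neg hTc]
        rw [hhβ, hkey]
        have hfβ1 : f β ≤ 1 := by
          simp only [hf]
          have hcx : ¬ (0 < ⟪coroot β, x⟫) := by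
            intro hpos
            exact hTc (Finset.mem_filter.mpr
              ⟨hβp, mem_pos_of_inner D w hw x hx β (Rpos0_subset_Rzero D hβp) hpos⟩)
          push_neg at hcx
          linarith
        have e2 : -(⟪coroot α, β⟫ * ⟪α, α⟫ / ⟪β, β⟫) * t ≤ K β * t :=
          mul_le_mul_of_nonneg_right hKq ht.le
        calc f β + -(⟪coroot α, β⟫ * ⟪α, α⟫ / ⟪β, β⟫) * t
            ≤ K β + K β * t := add_le_add (le_trans hfβ1 (hK1 β)) e2
          _ = K β * (1 + t) * 1 := by ring
  -- injectivity of ψ on S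
  have hinj : ∀ β₁ ∈ S, ∀ β₂ ∈ S, ψ β₁ = ψ β₂ → β₁ = β₂ := by
    intro β₁ h₁ β₂ h₂ heq
    by_cases c₁ : rRefl α β₁ ∈ Rpos0 D <;> by_cases c₂ : rRefl α β₂ ∈ Rpos0 D <;>
      simp only [hψ, if_pos, if_neg, c₁, c₂, if_true, if_false] at heq
    · have := congrArg (rRefl α) heq
      rwa [rRefl_rRefl α hα0, rRefl_rRefl α hα0] at this
    · exfalso
      apply c₂
      rw [← heq, rRefl_rRefl α hα0]
      exact (hSfact β₁ h₁).1
    · exfalso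
      apply c₁
      rw [heq, rRefl_rRefl α hα0]
      exact (hSfact β₂ h₂).1
    · exact heq
  -- ∏ h over S is at most ∏ f over T
  have hprodh : ∏ β ∈ S, h β ≤ ∏ γ ∈ T, f γ := by
    have e1 : ∏ β ∈ S, h β = ∏ β ∈ S.filter (fun β => ψ β ∈ T), f (ψ β) :=
      (Finset.prod_filter (fun β => ψ β ∈ T) (fun β => f (ψ β))).symm
    have hinj' : ∀ β₁ ∈ S.filter (fun β => ψ β ∈ T), ∀ β₂ ∈ S.filter (fun β => ψ β ∈ T),
        ψ β₁ = ψ β₂ → β₁ = β₂ := by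
      intro β₁ h₁ β₂ h₂
      exact hinj β₁ (Finset.mem_of_mem_filter β₁ h₁) β₂ (Finset.mem_of_mem_filter β₂ h₂)
    have e2 : ∏ β ∈ S.filter (fun β => ψ β ∈ T), f (ψ β)
        = ∏ γ ∈ (S.filter (fun β => ψ β ∈ T)).image ψ, f γ := (Finset.prod_image hinj').symm
    have hsub : (S.filter (fun β => ψ β ∈ T)).image ψ ⊆ T := by
      intro γ hγ
      obtain ⟨β, hβ, rfl⟩ := Finset.mem_image.mp hγ
      exact (Finset.mem_filter.mp hβ).2
    rw [e1, e2, ← Finset.prod_sdiff hsub]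
    have h1 : (1:ℝ) ≤ ∏ γ ∈ T \ ((S.filter (fun β => ψ β ∈ T)).image ψ), f γ := by
      rw [← Finset.prod_const_one (s := T \ ((S.filter (fun β => ψ β ∈ T)).image ψ))]
      exact Finset.prod_le_prod (fun i _ => zero_le_one)
        (fun i hi => honeT i (Finset.mem_sdiff.mp hi).1)
    have h2 : 0 ≤ ∏ γ ∈ (S.filter (fun β => ψ β ∈ T)).image ψ, f γ :=
      Finset.prod_nonneg (fun i hi => le_trans zero_le_one (honeT i (hsub hi)))
    exact le_mul_of_one_le_left h2 h1
  -- main chain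
  have hL : piTilde D (fun β => w.symm (rRefl α β)) (rRefl α x) = ∏ β ∈ S, f (rRefl α β) := by
    rw [piTilde]
    apply Finset.prod_congr rfl
    intro β _
    rw [hf, inner_coroot_rRefl α hα0]
  have hR : piTilde D (fun β => w.symm β) x = ∏ β ∈ T, f β := rfl
  have hchain : ∏ β ∈ S, f (rRefl α β)
      ≤ (∏ β ∈ S, K β) * (1 + t) ^ S.card * ∏ β ∈ S, h β := by
    calc ∏ β ∈ S, f (rRefl α β) ≤ ∏ β ∈ S, (K β * (1 + t) * h β) :=
          Finset.prod_le_prod h0 hterm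
      _ = (∏ β ∈ S, K β) * (1 + t) ^ S.card * ∏ β ∈ S, h β := by
          rw [Finset.prod_mul_distrib, Finset.prod_mul_distrib, Finset.prod_const]
  have hcard : S.card ≤ D.Rpos.card := by
    apply Finset.card_le_card
    intro β hβ
    exact (Finset.mem_filter.mp ((Finset.mem_filter.mp hβ).1)).1
  have hpow : (1 + t) ^ S.card ≤ (1 + t) ^ D.Rpos.card :=
    pow_le_pow_right₀ (by linarith) hcard
  have hCpos : (0:ℝ) < ∏ β ∈ S, K β :=
    Finset.prod_pos (fun β _ => lt_of_lt_of_le one_pos (hK1 β))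
  have hTnonneg : (0:ℝ) ≤ ∏ γ ∈ T, f γ :=
    Finset.prod_nonneg (fun i hi => le_trans zero_le_one (honeT i hi))
  rw [hL, hR]
  calc ∏ β ∈ S, f (rRefl α β)
      ≤ (∏ β ∈ S, K β) * (1 + t) ^ S.card * ∏ β ∈ S, h β := hchain
    _ ≤ (∏ β ∈ S, K β) * (1 + t) ^ S.card * ∏ γ ∈ T, f γ := by
        apply mul_le_mul_of_nonneg_left hprodh
        positivity
    _ = (∏ β ∈ S, K β) * (∏ γ ∈ T, f γ) * (1 + t) ^ S.card := by ring
    _ ≤ (∏ β ∈ S, K β) * (∏ γ ∈ T, f γ) * (1 + t) ^ D.Rpos.card := by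
        apply mul_le_mul_of_nonneg_left hpow
        positivity

end Main2
/-- (1) if `α ∈ R₀⁺ ∩ wR₀⁺` then `π̃_{r_α w}(r_α x) ≤ π̃_w(x)/(1 + (α∨,x))`
for all `x ∈ w a₊`; (2) if `α ∈ R₀⁻ ∩ wR₀⁺` then there is `C > 0` with
`π̃_{r_α w}(r_α x) ≤ C π̃_w(x) (1 + (α∨,x))^{|R⁺|}` for all `x ∈ w a₊`.
(Note `(r_α w)⁻¹ = w⁻¹ ∘ r_α` and `x ∈ w a₊ ↔ w⁻¹ x ∈ a₊`.) -/
theorem statement13 (D : HOData E) :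
    (∀ (w : weylGroup D) (α : E), α ∈ Rpos0 D → w.1.symm α ∈ Rpos0 D →
      ∀ x : E, w.1.symm x ∈ posChamber D →
        piTilde D (fun β => w.1.symm (rRefl α β)) (rRefl α x)
          ≤ piTilde D (fun β => w.1.symm β) x / (1 + ⟪coroot α, x⟫)) ∧
    (∀ (w : weylGroup D) (α : E), -α ∈ Rpos0 D → w.1.symm α ∈ Rpos0 D →
      ∃ C : ℝ, 0 < C ∧ ∀ x : E, w.1.symm x ∈ posChamber D →
        piTilde D (fun β => w.1.symm (rRefl α β)) (rRefl α x)
          ≤ C * piTilde D (fun β => w.1.symm β) x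
              * (1 + ⟪coroot α, x⟫) ^ (D.Rpos.card : ℕ)) := by

  constructor
  · intro w α hα hwα x hx
    exact part1 D w.1 w.2 α hα hwα x hx
  · intro w α hα hwα
    exact part2 D w.1 w.2 α hα hwα
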